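/- Let 1 < M ≤ d+1, γ > 0, and let κ_A, κ_U : [0,4] → ℝ with κ_A decreasing and κ_U decreasing and convex. Define the kernel contrastive loss L_KCL(U,V) = −(1/M) Σ_{i=1}^M κ_A(‖u_i − v_i‖²) + (γ/(M(M−1))) Σ_{i≠j} κ_U(‖u_i − u_j‖²) for M-tuples U, V of unit vectors in ℝ^d, and its symmetric version L_sym(U,V) = ½(L_KCL(U,V) + L_KCL(V,U)). Then every configuration with u_i = v_i for all i and ⟨u_i, u_j⟩ = −1/(M−1) for all i ≠ j attains the minimum of L_sym over all such (U,V). Moreover, if κ_A is strictly decreasing and κ_U is strictly decreasing and strictly convex, these configurations are the unique minimizers. -/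

import Mathlib

open scoped BigOperators RealInnerProductSpace

noncomputable section

/-- Mini-batch kernel contrastive loss with radial kernel profiles `κA, κU` and
weighting coefficient `γ`. -/
def Lkcl (d M : ℕ) (γ : ℝ) (κA κU : ℝ → ℝ)
    (U V : Fin M → EuclideanSpace ℝ (Fin d)) : ℝ :=
  -((1 / (M : ℝ)) * ∑ i, κA (‖U i - V i‖ ^ 2)) +
    (γ / ((M : ℝ) * ((M : ℝ) - 1))) *
      ∑ i, ∑ j ∈ Finset.univ.erase i, κU (‖U i - U j‖ ^ 2)

/-- Symmetrised kernel contrastive loss. -/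
def LkclSym (d M : ℕ) (γ : ℝ) (κA κU : ℝ → ℝ)
    (U V : Fin M → EuclideanSpace ℝ (Fin d)) : ℝ :=
  (Lkcl d M γ κA κU U V + Lkcl d M γ κA κU V U) / 2

namespace KCLaux

lemma sq_norm_mem {E : Type*} [NormedAddCommGroup E] [InnerProductSpace ℝ E]
    {u v : E} (hu : ‖u‖ = 1) (hv : ‖v‖ = 1) : ‖u - v‖ ^ 2 ∈ Set.Icc (0:ℝ) 4 := by
  constructor
  · positivity
  · have h : ‖u - v‖ ≤ 2 := by
      calc ‖u - v‖ ≤ ‖u‖ + ‖v‖ := norm_sub_le _ _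
        _ = 2 := by rw [hu, hv]; norm_num
    nlinarith [norm_nonneg (u - v)]

lemma norm_sub_sq_unit {E : Type*} [NormedAddCommGroup E] [InnerProductSpace ℝ E]
    {u v : E} (hu : ‖u‖ = 1) (hv : ‖v‖ = 1) : ‖u - v‖ ^ 2 = 2 - 2 * ⟪u, v⟫ := by
  rw [norm_sub_sq_real, hu, hv]; ring

lemma inner_double_sum {d M : ℕ} (U : Fin M → EuclideanSpace ℝ (Fin d))
    (hU : ∀ i, ‖U i‖ = 1) :
    ∑ i, ∑ j ∈ Finset.univ.erase i, ⟪U i, U j⟫ = ‖∑ i, U i‖ ^ 2 - M := by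
  have h1 : ∀ i : Fin M, ∑ j ∈ Finset.univ.erase i, ⟪U i, U j⟫
      = ⟪U i, ∑ j, U j⟫ - 1 := by
    intro i
    rw [Finset.sum_erase_eq_sub (Finset.mem_univ i), ← inner_sum,
      real_inner_self_eq_norm_sq, hU i, one_pow]
  calc ∑ i, ∑ j ∈ Finset.univ.erase i, ⟪U i, U j⟫
      = ∑ i, (⟪U i, ∑ j, U j⟫ - 1) := by exact Finset.sum_congr rfl fun i _ => h1 i
    _ = ⟪∑ i, U i, ∑ j, U j⟫ - M := by
        rw [Finset.sum_sub_distrib, ← sum_inner]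
        simp
    _ = ‖∑ i, U i‖ ^ 2 - M := by rw [real_inner_self_eq_norm_sq]



lemma card_T (M : ℕ) :
    ((Finset.univ : Finset (Fin M)).sigma fun i => Finset.univ.erase i).card
      = M * (M - 1) := by
  rw [Finset.card_sigma]
  simp [Finset.card_erase_of_mem, mul_comm]

variable {d M : ℕ}

lemma unif_ge (hM : 1 < M) (κU : ℝ → ℝ)
    (hκU : AntitoneOn κU (Set.Icc 0 4)) (hκUconv : ConvexOn ℝ (Set.Icc 0 4) κU)
    (U : Fin M → EuclideanSpace ℝ (Fin d)) (hU : ∀ i, ‖U i‖ = 1) :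
    (M:ℝ) * ((M:ℝ)-1) * κU (2*(M:ℝ)/((M:ℝ)-1)) ≤
      ∑ i, ∑ j ∈ Finset.univ.erase i, κU (‖U i - U j‖^2) := by
  classical
  set m : ℝ := (M:ℝ) with hm
  have hm2 : (2:ℝ) ≤ m := by rw [hm]; exact_mod_cast hM
  have hm1 : (0:ℝ) < m - 1 := by linarith
  have hNpos : (0:ℝ) < m * (m - 1) := by nlinarith
  set T := (Finset.univ : Finset (Fin M)).sigma fun i => Finset.univ.erase i with hT
  set t : (Σ _ : Fin M, Fin M) → ℝ := fun p => ‖U p.1 - U p.2‖ ^ 2 with ht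
  have hcard : (T.card : ℝ) = m * (m - 1) := by
    rw [hT, card_T M, Nat.cast_mul, Nat.cast_sub hM.le]
    simp [hm]
  have hsum_eq : ∑ i, ∑ j ∈ Finset.univ.erase i, κU (‖U i - U j‖^2)
      = ∑ p ∈ T, κU (t p) := by rw [Finset.sum_sigma]
  have hmem : ∀ p ∈ T, t p ∈ Set.Icc (0:ℝ) 4 := fun p _ =>
    sq_norm_mem (hU p.1) (hU p.2)
  have hS : ∑ p ∈ T, t p = 2 * (m * (m-1)) + 2 * m - 2 * ‖∑ i, U i‖ ^ 2 := by
    rw [Finset.sum_sigma]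
    have key : ∀ i : Fin M, ∀ j ∈ Finset.univ.erase i,
        ‖U i - U j‖ ^ 2 = 2 - 2 * ⟪U i, U j⟫ := fun i j _ =>
      norm_sub_sq_unit (hU i) (hU j)
    calc ∑ i, ∑ j ∈ Finset.univ.erase i, t ⟨i, j⟩
        = ∑ i, ∑ j ∈ Finset.univ.erase i, (2 - 2 * ⟪U i, U j⟫) :=
          Finset.sum_congr rfl fun i _ => Finset.sum_congr rfl fun j hj => key i j hj
      _ = ∑ i, ((2:ℝ) * (m - 1) - 2 * ∑ j ∈ Finset.univ.erase i, ⟪U i, U j⟫) := by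
          refine Finset.sum_congr rfl fun i _ => ?_
          rw [Finset.sum_sub_distrib, Finset.sum_const, Finset.mul_sum]
          have hcerase : (Finset.univ.erase i).card = M - 1 := by
            simp [Finset.card_erase_of_mem]
          rw [hcerase, nsmul_eq_mul, Nat.cast_sub hM.le]
          simp only [hm]
          push_cast
          ring
      _ = m * (2 * (m - 1)) - 2 * (‖∑ i, U i‖ ^ 2 - m) := by
          rw [Finset.sum_sub_distrib, Finset.sum_const, ← Finset.mul_sum,
            inner_double_sum U hU, Finset.card_univ, Fintype.card_fin, nsmul_eq_mul]
      _ = 2 * (m * (m-1)) + 2 * m - 2 * ‖∑ i, U i‖ ^ 2 := by ring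
  set μ : ℝ := (m * (m-1))⁻¹ * ∑ p ∈ T, t p with hμ
  have hμ0 : 0 ≤ μ := by
    apply mul_nonneg (by positivity)
    exact Finset.sum_nonneg fun p hp => (hmem p hp).1
  have hc4 : 2 * m / (m - 1) ≤ 4 := by
    rw [div_le_iff₀ hm1]; nlinarith
  have hc0 : (0:ℝ) ≤ 2 * m / (m - 1) := by positivity
  have hμc : μ ≤ 2 * m / (m - 1) := by
    rw [hμ, hS, inv_mul_le_iff₀ hNpos]
    have harith : m * (m-1) * (2 * m / (m - 1)) = 2 * m * m := by
      field_simp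
    rw [harith]
    nlinarith [sq_nonneg (‖∑ i, U i‖)]
  have hw : ∑ _p ∈ T, (m * (m-1))⁻¹ = 1 := by
    rw [Finset.sum_const, nsmul_eq_mul, hcard]
    field_simp
  have hjensen : κU (∑ p ∈ T, (m * (m-1))⁻¹ • t p)
      ≤ ∑ p ∈ T, (m * (m-1))⁻¹ • κU (t p) :=
    hκUconv.map_sum_le (fun p _ => by positivity) hw hmem
  have hμT : ∑ p ∈ T, (m * (m-1))⁻¹ • t p = μ := by
    simp only [smul_eq_mul]
    rw [hμ, Finset.mul_sum]
  have hmono : κU (2*m/(m-1)) ≤ κU μ :=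
    hκU ⟨hμ0, le_trans hμc hc4⟩ ⟨hc0, hc4⟩ hμc
  rw [hsum_eq]
  have h2 : κU μ ≤ (m * (m-1))⁻¹ * ∑ p ∈ T, κU (t p) := by
    rw [← hμT]
    refine le_trans hjensen (le_of_eq ?_)
    simp only [smul_eq_mul]
    rw [Finset.mul_sum]
  calc m * (m-1) * κU (2*m/(m-1)) ≤ m * (m-1) * κU μ :=
        mul_le_mul_of_nonneg_left hmono hNpos.le
    _ ≤ ∑ p ∈ T, κU (t p) := by
        have h3 := mul_le_mul_of_nonneg_left h2 hNpos.le
        rwa [← mul_assoc, mul_inv_cancel₀ hNpos.ne', one_mul] at h3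

lemma unif_eq (hM : 1 < M) (κU : ℝ → ℝ)
    (hκU : AntitoneOn κU (Set.Icc 0 4)) (hκUconv : ConvexOn ℝ (Set.Icc 0 4) κU)
    (hsU : StrictAntiOn κU (Set.Icc 0 4)) (hsC : StrictConvexOn ℝ (Set.Icc 0 4) κU)
    (U : Fin M → EuclideanSpace ℝ (Fin d)) (hU : ∀ i, ‖U i‖ = 1)
    (heq : ∑ i, ∑ j ∈ Finset.univ.erase i, κU (‖U i - U j‖^2)
      = (M:ℝ) * ((M:ℝ)-1) * κU (2*(M:ℝ)/((M:ℝ)-1))) :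
    ∀ i j, i ≠ j → ⟪U i, U j⟫ = -1/((M:ℝ)-1) := by
  classical
  set m : ℝ := (M:ℝ) with hm
  have hm2 : (2:ℝ) ≤ m := by rw [hm]; exact_mod_cast hM
  have hm1 : (0:ℝ) < m - 1 := by linarith
  have hNpos : (0:ℝ) < m * (m - 1) := by nlinarith
  set T := (Finset.univ : Finset (Fin M)).sigma fun i => Finset.univ.erase i with hT
  set t : (Σ _ : Fin M, Fin M) → ℝ := fun p => ‖U p.1 - U p.2‖ ^ 2 with ht
  have hcard : (T.card : ℝ) = m * (m - 1) := by
    rw [hT, card_T M, Nat.cast_mul, Nat.cast_sub hM.le]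
    simp [hm]
  have hsum_eq : ∑ i, ∑ j ∈ Finset.univ.erase i, κU (‖U i - U j‖^2)
      = ∑ p ∈ T, κU (t p) := by rw [Finset.sum_sigma]
  have hmem : ∀ p ∈ T, t p ∈ Set.Icc (0:ℝ) 4 := fun p _ =>
    sq_norm_mem (hU p.1) (hU p.2)
  have hS : ∑ p ∈ T, t p = 2 * (m * (m-1)) + 2 * m - 2 * ‖∑ i, U i‖ ^ 2 := by
    rw [Finset.sum_sigma]
    have key : ∀ i : Fin M, ∀ j ∈ Finset.univ.erase i,
        ‖U i - U j‖ ^ 2 = 2 - 2 * ⟪U i, U j⟫ := fun i j _ =>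
      norm_sub_sq_unit (hU i) (hU j)
    calc ∑ i, ∑ j ∈ Finset.univ.erase i, t ⟨i, j⟩
        = ∑ i, ∑ j ∈ Finset.univ.erase i, (2 - 2 * ⟪U i, U j⟫) :=
          Finset.sum_congr rfl fun i _ => Finset.sum_congr rfl fun j hj => key i j hj
      _ = ∑ i, ((2:ℝ) * (m - 1) - 2 * ∑ j ∈ Finset.univ.erase i, ⟪U i, U j⟫) := by
          refine Finset.sum_congr rfl fun i _ => ?_
          rw [Finset.sum_sub_distrib, Finset.sum_const, Finset.mul_sum]
          have hcerase : (Finset.univ.erase i).card = M - 1 := by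
            simp [Finset.card_erase_of_mem]
          rw [hcerase, nsmul_eq_mul, Nat.cast_sub hM.le]
          simp only [hm]
          push_cast
          ring
      _ = m * (2 * (m - 1)) - 2 * (‖∑ i, U i‖ ^ 2 - m) := by
          rw [Finset.sum_sub_distrib, Finset.sum_const, ← Finset.mul_sum,
            inner_double_sum U hU, Finset.card_univ, Fintype.card_fin, nsmul_eq_mul]
      _ = 2 * (m * (m-1)) + 2 * m - 2 * ‖∑ i, U i‖ ^ 2 := by ring
  set μ : ℝ := (m * (m-1))⁻¹ * ∑ p ∈ T, t p with hμ
  have hμ0 : 0 ≤ μ := by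
    apply mul_nonneg (by positivity)
    exact Finset.sum_nonneg fun p hp => (hmem p hp).1
  have hc4 : 2 * m / (m - 1) ≤ 4 := by
    rw [div_le_iff₀ hm1]; nlinarith
  have hc0 : (0:ℝ) ≤ 2 * m / (m - 1) := by positivity
  have hμc : μ ≤ 2 * m / (m - 1) := by
    rw [hμ, hS, inv_mul_le_iff₀ hNpos]
    have harith : m * (m-1) * (2 * m / (m - 1)) = 2 * m * m := by
      field_simp
    rw [harith]
    nlinarith [sq_nonneg (‖∑ i, U i‖)]
  have hw : ∑ _p ∈ T, (m * (m-1))⁻¹ = 1 := by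
    rw [Finset.sum_const, nsmul_eq_mul, hcard]
    field_simp
  have hjensen : κU (∑ p ∈ T, (m * (m-1))⁻¹ • t p)
      ≤ ∑ p ∈ T, (m * (m-1))⁻¹ • κU (t p) :=
    hκUconv.map_sum_le (fun p _ => by positivity) hw hmem
  have hμT : ∑ p ∈ T, (m * (m-1))⁻¹ • t p = μ := by
    simp only [smul_eq_mul]
    rw [hμ, Finset.mul_sum]
  have hmono : κU (2*m/(m-1)) ≤ κU μ :=
    hκU ⟨hμ0, le_trans hμc hc4⟩ ⟨hc0, hc4⟩ hμc
  have hsumT : ∑ p ∈ T, κU (t p) = m * (m-1) * κU (2*m/(m-1)) := by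
    rw [← hsum_eq, heq]
  -- extract the equality κU μ = κU c
  have h2 : κU μ ≤ (m * (m-1))⁻¹ * ∑ p ∈ T, κU (t p) := by
    rw [← hμT]
    refine le_trans hjensen (le_of_eq ?_)
    simp only [smul_eq_mul]
    rw [Finset.mul_sum]
  have h3 : (m * (m-1))⁻¹ * ∑ p ∈ T, κU (t p) = κU (2*m/(m-1)) := by
    rw [hsumT, ← mul_assoc, inv_mul_cancel₀ hNpos.ne', one_mul]
  have hκeq : κU μ = κU (2*m/(m-1)) :=
    le_antisymm (h3 ▸ h2) hmono
  have hμeqc : μ = 2*m/(m-1) := by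
    by_contra hne
    have hlt : μ < 2*m/(m-1) := lt_of_le_of_ne hμc hne
    have := hsU ⟨hμ0, le_trans hμc hc4⟩ ⟨hc0, hc4⟩ hlt
    rw [hκeq] at this
    exact lt_irrefl _ this
  -- Jensen equality case: all squared distances are equal
  have hjeq : ∑ p ∈ T, (m * (m-1))⁻¹ • κU (t p)
      ≤ κU (∑ p ∈ T, (m * (m-1))⁻¹ • t p) := by
    rw [hμT, hκeq]
    refine le_of_eq ?_
    simp only [smul_eq_mul]
    rw [← Finset.mul_sum, h3]
  have hall := hsC.eq_of_le_map_sum (fun p _ => by positivity) hw hmem hjeq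
  -- each off-diagonal squared distance equals μ
  intro i j hij
  have hpT : (⟨i, j⟩ : Σ _ : Fin M, Fin M) ∈ T := by
    rw [hT, Finset.mem_sigma]
    exact ⟨Finset.mem_univ _, Finset.mem_erase.2 ⟨Ne.symm hij, Finset.mem_univ _⟩⟩
  have htp : t ⟨i, j⟩ = μ := by
    rw [← hμT]
    have : ∀ p ∈ T, (m * (m-1))⁻¹ • t p = (m * (m-1))⁻¹ • t ⟨i, j⟩ :=
      fun p hp => by rw [hall hp hpT]
    rw [Finset.sum_congr rfl this, Finset.sum_const, nsmul_eq_mul, hcard]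
    rw [smul_eq_mul, ← mul_assoc, mul_inv_cancel₀ hNpos.ne', one_mul]
  have hnorm : ‖U i - U j‖ ^ 2 = 2 - 2 * ⟪U i, U j⟫ := norm_sub_sq_unit (hU i) (hU j)
  have : (2:ℝ) - 2 * ⟪U i, U j⟫ = 2*m/(m-1) := by
    rw [← hnorm]
    have : t ⟨i, j⟩ = ‖U i - U j‖ ^ 2 := rfl
    rw [← this, htp, hμeqc]
  have hgoal : ⟪U i, U j⟫ = -1/(m-1) := by
    field_simp at this ⊢
    linarith
  exact hgoal

lemma attr_le (κA : ℝ → ℝ) (hκA : AntitoneOn κA (Set.Icc 0 4))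
    (U V : Fin M → EuclideanSpace ℝ (Fin d))
    (hU : ∀ i, ‖U i‖ = 1) (hV : ∀ i, ‖V i‖ = 1) :
    ∑ i, κA (‖U i - V i‖ ^ 2) ≤ (M:ℝ) * κA 0 := by
  have h : ∀ i : Fin M, κA (‖U i - V i‖ ^ 2) ≤ κA 0 := fun i =>
    hκA (by norm_num) (sq_norm_mem (hU i) (hV i)) (sq_norm_mem (hU i) (hV i)).1
  calc ∑ i, κA (‖U i - V i‖ ^ 2) ≤ ∑ _i : Fin M, κA 0 :=
        Finset.sum_le_sum fun i _ => h i
    _ = (M:ℝ) * κA 0 := by simp [Finset.sum_const, nsmul_eq_mul]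

lemma attr_eq (κA : ℝ → ℝ) (hκA : AntitoneOn κA (Set.Icc 0 4))
    (hsA : StrictAntiOn κA (Set.Icc 0 4))
    (U V : Fin M → EuclideanSpace ℝ (Fin d))
    (hU : ∀ i, ‖U i‖ = 1) (hV : ∀ i, ‖V i‖ = 1)
    (heq : ∑ i, κA (‖U i - V i‖ ^ 2) = (M:ℝ) * κA 0) :
    ∀ i, U i = V i := by
  intro i
  by_contra hne
  have hpos : 0 < ‖U i - V i‖ ^ 2 :=
    pow_pos (norm_pos_iff.2 (sub_ne_zero.2 hne)) 2
  have hstrict : κA (‖U i - V i‖ ^ 2) < κA 0 :=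
    hsA (by norm_num) (sq_norm_mem (hU i) (hV i)) hpos
  have hlt : ∑ i, κA (‖U i - V i‖ ^ 2) < ∑ _i : Fin M, κA 0 :=
    Finset.sum_lt_sum (fun j _ =>
      hκA (by norm_num) (sq_norm_mem (hU j) (hV j)) (sq_norm_mem (hU j) (hV j)).1)
      ⟨i, Finset.mem_univ i, hstrict⟩
  rw [heq] at hlt
  have hconst : ∑ _i : Fin M, κA 0 = (M:ℝ) * κA 0 := by
    simp [Finset.sum_const, nsmul_eq_mul]
  rw [hconst] at hlt
  exact lt_irrefl _ hlt

lemma Lkcl_ge (hM : 1 < M) {γ : ℝ} (hγ : 0 < γ) (κA κU : ℝ → ℝ)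
    (hκA : AntitoneOn κA (Set.Icc 0 4)) (hκU : AntitoneOn κU (Set.Icc 0 4))
    (hκUconv : ConvexOn ℝ (Set.Icc 0 4) κU)
    (U V : Fin M → EuclideanSpace ℝ (Fin d))
    (hU : ∀ i, ‖U i‖ = 1) (hV : ∀ i, ‖V i‖ = 1) :
    -κA 0 + γ * κU (2*(M:ℝ)/((M:ℝ)-1)) ≤ Lkcl d M γ κA κU U V := by
  have hm2 : (2:ℝ) ≤ (M:ℝ) := by exact_mod_cast hM
  have hm0 : (0:ℝ) < (M:ℝ) := by linarith
  have hm1 : (0:ℝ) < (M:ℝ) - 1 := by linarith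
  have hNpos : (0:ℝ) < (M:ℝ) * ((M:ℝ) - 1) := by nlinarith
  have hA := attr_le κA hκA U V hU hV
  have hB := unif_ge hM κU hκU hκUconv U hU
  rw [Lkcl]
  have h1 : -((1 / (M:ℝ)) * ∑ i, κA (‖U i - V i‖ ^ 2)) ≥ -κA 0 := by
    have := mul_le_mul_of_nonneg_left hA (by positivity : (0:ℝ) ≤ 1 / (M:ℝ))
    have heq : (1 / (M:ℝ)) * ((M:ℝ) * κA 0) = κA 0 := by field_simp
    rw [heq] at this
    linarith
  have h2 : (γ / ((M:ℝ) * ((M:ℝ) - 1))) *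
      ∑ i, ∑ j ∈ Finset.univ.erase i, κU (‖U i - U j‖ ^ 2)
      ≥ γ * κU (2*(M:ℝ)/((M:ℝ)-1)) := by
    have hcoef : (0:ℝ) < γ / ((M:ℝ) * ((M:ℝ) - 1)) := by positivity
    have := mul_le_mul_of_nonneg_left hB hcoef.le
    have heq : (γ / ((M:ℝ) * ((M:ℝ) - 1))) *
        ((M:ℝ) * ((M:ℝ)-1) * κU (2*(M:ℝ)/((M:ℝ)-1))) = γ * κU (2*(M:ℝ)/((M:ℝ)-1)) := by
      field_simp
    rw [heq] at this
    linarith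
  linarith

lemma Lkcl_simplex (hM : 1 < M) {γ : ℝ} (κA κU : ℝ → ℝ)
    (U V : Fin M → EuclideanSpace ℝ (Fin d))
    (hUV : ∀ i, U i = V i)
    (hsimp : ∀ i j, i ≠ j → ⟪U i, U j⟫ = -1/((M:ℝ)-1))
    (hU : ∀ i, ‖U i‖ = 1) :
    Lkcl d M γ κA κU U V = -κA 0 + γ * κU (2*(M:ℝ)/((M:ℝ)-1)) := by
  have hm2 : (2:ℝ) ≤ (M:ℝ) := by exact_mod_cast hM
  have hm0 : (0:ℝ) < (M:ℝ) := by linarith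
  have hm1 : (0:ℝ) < (M:ℝ) - 1 := by linarith
  rw [Lkcl]
  have hA : ∑ i, κA (‖U i - V i‖ ^ 2) = (M:ℝ) * κA 0 := by
    have : ∀ i : Fin M, κA (‖U i - V i‖ ^ 2) = κA 0 := fun i => by
      rw [hUV i, sub_self, norm_zero]; norm_num
    rw [Finset.sum_congr rfl fun i _ => this i]
    simp [Finset.sum_const, nsmul_eq_mul]
  have hB : ∑ i, ∑ j ∈ Finset.univ.erase i, κU (‖U i - U j‖ ^ 2)
      = (M:ℝ) * ((M:ℝ)-1) * κU (2*(M:ℝ)/((M:ℝ)-1)) := by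
    have hterm : ∀ i : Fin M, ∀ j ∈ Finset.univ.erase i,
        κU (‖U i - U j‖ ^ 2) = κU (2*(M:ℝ)/((M:ℝ)-1)) := by
      intro i j hj
      have hij : i ≠ j := fun h => (Finset.mem_erase.1 hj).1 h.symm
      have h1 : ‖U i - U j‖ ^ 2 = 2 - 2 * ⟪U i, U j⟫ :=
        norm_sub_sq_unit (hU i) (hU j)
      rw [h1, hsimp i j hij]
      congr 1
      field_simp
      ring
    have : ∀ i : Fin M, ∑ j ∈ Finset.univ.erase i, κU (‖U i - U j‖ ^ 2)
        = ((M:ℝ)-1) * κU (2*(M:ℝ)/((M:ℝ)-1)) := by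
      intro i
      rw [Finset.sum_congr rfl (hterm i), Finset.sum_const]
      have hcerase : (Finset.univ.erase i).card = M - 1 := by
        simp [Finset.card_erase_of_mem]
      rw [hcerase, nsmul_eq_mul, Nat.cast_sub hM.le, Nat.cast_one]
    rw [Finset.sum_congr rfl fun i _ => this i, Finset.sum_const]
    simp [Finset.sum_const]
    ring
  rw [hA, hB]
  field_simp


lemma exists_simplex (d M : ℕ) (hM : 1 < M) (hMd : M ≤ d + 1) :
    ∃ U0 : Fin M → EuclideanSpace ℝ (Fin d), (∀ i, ‖U0 i‖ = 1) ∧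
      ∀ i j, i ≠ j → ⟪U0 i, U0 j⟫ = -1/((M:ℝ)-1) := by
  classical
  set m : ℝ := (M:ℝ) with hm
  have hm2 : (2:ℝ) ≤ m := by rw [hm]; exact_mod_cast hM
  have hm0 : (0:ℝ) < m := by linarith
  have hm1 : (0:ℝ) < m - 1 := by linarith
  -- the all-ones vector in ℝ^M
  set ones : EuclideanSpace ℝ (Fin M) :=
    (WithLp.equiv 2 (Fin M → ℝ)).symm (fun _ => 1) with hones
  have hones_apply : ∀ k : Fin M, ones k = 1 := fun k => rfl
  have hoo : ⟪ones, ones⟫ = m := by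
    simp [PiLp.inner_apply, hones_apply, RCLike.inner_apply, hm]
    rw [EuclideanSpace.norm_eq, Real.sq_sqrt (by positivity)]
    simp [hones_apply]
  have hso : ∀ i : Fin M, ⟪EuclideanSpace.single i (1:ℝ), ones⟫ = 1 := by
    intro i
    rw [EuclideanSpace.inner_single_left]
    simp [hones_apply]
  have hos : ∀ i : Fin M, ⟪ones, EuclideanSpace.single i (1:ℝ)⟫ = 1 := by
    intro i
    rw [EuclideanSpace.inner_single_right]
    simp [hones_apply]
  have hss : ∀ i j : Fin M, ⟪EuclideanSpace.single i (1:ℝ),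
      EuclideanSpace.single j (1:ℝ)⟫ = if i = j then 1 else 0 := by
    intro i j
    rw [EuclideanSpace.inner_single_left]
    simp [EuclideanSpace.single_apply, eq_comm]
  -- simplex vertices in the hyperplane of ℝ^M
  set r : ℝ := Real.sqrt (m / (m-1)) with hr
  have hr2 : r ^ 2 = m / (m-1) := Real.sq_sqrt (by positivity)
  have hrrm : r * r * (m - 1) = m := by
    have h := hr2
    rw [sq] at h
    field_simp at h
    linarith
  set y : Fin M → EuclideanSpace ℝ (Fin M) := fun i =>
    r • EuclideanSpace.single i (1:ℝ) - (r / m) • ones with hy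
  have hyy : ∀ i j : Fin M, ⟪y i, y j⟫ = if i = j then 1 else -1/(m-1) := by
    intro i j
    rw [hy]
    simp only [inner_sub_left, inner_sub_right, real_inner_smul_left, real_inner_smul_right,
      hss, hso, hos, hoo]
    by_cases h : i = j
    · simp only [h, if_pos rfl, if_pos]
      field_simp
      linear_combination hrrm
    · rw [if_neg h, if_neg h]
      field_simp
      linear_combination (-1) * hrrm
  have hynorm : ∀ i, ‖y i‖ = 1 := by
    intro i
    have h1 : ⟪y i, y i⟫ = 1 := by rw [hyy i i, if_pos rfl]
    have h2 : ‖y i‖ ^ 2 = 1 := by rw [← real_inner_self_eq_norm_sq, h1]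
    nlinarith [norm_nonneg (y i)]
  -- hyperplane W
  set W : Submodule ℝ (EuclideanSpace ℝ (Fin M)) := (ℝ ∙ ones)ᗮ with hW
  have hyW : ∀ i, y i ∈ W := by
    intro i
    rw [hW, Submodule.mem_orthogonal_singleton_iff_inner_right]
    rw [hy]
    simp only [inner_sub_right, real_inner_smul_right, hos, hoo]
    field_simp
    ring
  have hones_ne : ones ≠ 0 := by
    intro h
    rw [h, inner_zero_left] at hoo
    linarith
  have hfrW : Module.finrank ℝ W = M - 1 := by
    have h1 : Module.finrank ℝ (ℝ ∙ ones) = 1 := finrank_span_singleton hones_ne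
    have h2 := Submodule.finrank_add_finrank_orthogonal (K := ℝ ∙ ones)
    rw [h1, finrank_euclideanSpace_fin] at h2
    rw [hW]
    omega
  -- a subspace S of ℝ^d of dimension M - 1
  have hd' : M - 1 ≤ d := by omega
  set g : Fin (M-1) → EuclideanSpace ℝ (Fin d) := fun i =>
    EuclideanSpace.single (Fin.castLE hd' i) 1 with hg
  have hgon : Orthonormal ℝ g :=
    (EuclideanSpace.orthonormal_single (𝕜 := ℝ) (ι := Fin d)).comp _
      (Fin.castLE_injective hd')
  set S : Submodule ℝ (EuclideanSpace ℝ (Fin d)) := Submodule.span ℝ (Set.range g) with hS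
  have hfrS : Module.finrank ℝ S = M - 1 := by
    rw [hS, finrank_span_eq_card hgon.linearIndependent, Fintype.card_fin]
  -- isometry between W and S
  have hfin : Module.finrank ℝ W = Module.finrank ℝ S := by rw [hfrW, hfrS]
  let bW := stdOrthonormalBasis ℝ W
  let bS := stdOrthonormalBasis ℝ S
  let T : W ≃ₗᵢ[ℝ] S :=
    bW.repr.trans ((LinearIsometryEquiv.piLpCongrLeft 2 ℝ ℝ (finCongr hfin)).trans bS.repr.symm)
  refine ⟨fun i => ((T ⟨y i, hyW i⟩ : S) : EuclideanSpace ℝ (Fin d)), ?_, ?_⟩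
  · intro i
    show ‖((T ⟨y i, hyW i⟩ : S) : EuclideanSpace ℝ (Fin d))‖ = 1
    have h1 : ‖((T ⟨y i, hyW i⟩ : S) : EuclideanSpace ℝ (Fin d))‖ = ‖T ⟨y i, hyW i⟩‖ := rfl
    rw [h1, T.norm_map]
    exact hynorm i
  · intro i j hij
    show ⟪((T ⟨y i, hyW i⟩ : S) : EuclideanSpace ℝ (Fin d)),
        ((T ⟨y j, hyW j⟩ : S) : EuclideanSpace ℝ (Fin d))⟫ = -1/((M:ℝ)-1)
    have h1 : ⟪((T ⟨y i, hyW i⟩ : S) : EuclideanSpace ℝ (Fin d)),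
        ((T ⟨y j, hyW j⟩ : S) : EuclideanSpace ℝ (Fin d))⟫
        = ⟪T ⟨y i, hyW i⟩, T ⟨y j, hyW j⟩⟫ := (Submodule.coe_inner _ _ _).symm
    rw [h1, T.inner_map_map, Submodule.coe_inner]
    show ⟪y i, y j⟫ = -1/(m-1)
    rw [hyy i j, if_neg hij]


lemma eq_case {d M : ℕ} (hM : 1 < M) {γ : ℝ} (hγ : 0 < γ) (κA κU : ℝ → ℝ)
    (hκA : AntitoneOn κA (Set.Icc 0 4)) (hκU : AntitoneOn κU (Set.Icc 0 4))
    (hκUconv : ConvexOn ℝ (Set.Icc 0 4) κU)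
    (U V : Fin M → EuclideanSpace ℝ (Fin d))
    (hU : ∀ i, ‖U i‖ = 1) (hV : ∀ i, ‖V i‖ = 1)
    (heq : Lkcl d M γ κA κU U V = -κA 0 + γ * κU (2*(M:ℝ)/((M:ℝ)-1))) :
    (∑ i, κA (‖U i - V i‖ ^ 2) = (M:ℝ) * κA 0) ∧
    (∑ i, ∑ j ∈ Finset.univ.erase i, κU (‖U i - U j‖ ^ 2)
      = (M:ℝ) * ((M:ℝ)-1) * κU (2*(M:ℝ)/((M:ℝ)-1))) := by
  have hm2 : (2:ℝ) ≤ (M:ℝ) := by exact_mod_cast hM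
  have hm0 : (0:ℝ) < (M:ℝ) := by linarith
  have hm1 : (0:ℝ) < (M:ℝ) - 1 := by linarith
  have hNpos : (0:ℝ) < (M:ℝ) * ((M:ℝ) - 1) := by nlinarith
  have hA := attr_le κA hκA U V hU hV
  have hBU := unif_ge hM κU hκU hκUconv U hU
  set A := ∑ i, κA (‖U i - V i‖ ^ 2) with hAdef
  set Bu := ∑ i, ∑ j ∈ Finset.univ.erase i, κU (‖U i - U j‖ ^ 2) with hBudef
  set c := 2*(M:ℝ)/((M:ℝ)-1) with hc
  rw [Lkcl, ← hAdef, ← hBudef] at heq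
  have h1 : -((1 / (M:ℝ)) * A) ≥ -κA 0 := by
    have := mul_le_mul_of_nonneg_left hA (by positivity : (0:ℝ) ≤ 1 / (M:ℝ))
    have heq2 : (1 / (M:ℝ)) * ((M:ℝ) * κA 0) = κA 0 := by field_simp
    rw [heq2] at this
    linarith
  have h2 : (γ / ((M:ℝ) * ((M:ℝ) - 1))) * Bu ≥ γ * κU c := by
    have hcoef : (0:ℝ) < γ / ((M:ℝ) * ((M:ℝ) - 1)) := by positivity
    have := mul_le_mul_of_nonneg_left hBU hcoef.le
    have heq2 : (γ / ((M:ℝ) * ((M:ℝ) - 1))) *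
        ((M:ℝ) * ((M:ℝ)-1) * κU c) = γ * κU c := by
      field_simp
    rw [heq2] at this
    linarith
  have e1 : -((1 / (M:ℝ)) * A) = -κA 0 := by linarith
  have e2 : (γ / ((M:ℝ) * ((M:ℝ) - 1))) * Bu = γ * κU c := by linarith
  constructor
  · have e1' : (1 / (M:ℝ)) * A = (1 / (M:ℝ)) * ((M:ℝ) * κA 0) := by
      have heq2 : (1 / (M:ℝ)) * ((M:ℝ) * κA 0) = κA 0 := by field_simp
      rw [heq2]
      linarith
    exact mul_left_cancel₀ (by positivity : (1 / (M:ℝ)) ≠ 0) e1'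
  · have e2' : (γ / ((M:ℝ) * ((M:ℝ) - 1))) * Bu
        = (γ / ((M:ℝ) * ((M:ℝ) - 1))) * ((M:ℝ) * ((M:ℝ)-1) * κU c) := by
      have heq2 : (γ / ((M:ℝ) * ((M:ℝ) - 1))) *
          ((M:ℝ) * ((M:ℝ)-1) * κU c) = γ * κU c := by
        field_simp
      rw [heq2]
      linarith
    exact mul_left_cancel₀ (by positivity : (γ / ((M:ℝ) * ((M:ℝ) - 1))) ≠ 0) e2'

end KCLaux

theorem stmt_5 (d M : ℕ) (hM : 1 < M) (hMd : M ≤ d + 1) (γ : ℝ) (hγ : 0 < γ)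
    (κA κU : ℝ → ℝ)
    (hκA : AntitoneOn κA (Set.Icc 0 4))
    (hκU : AntitoneOn κU (Set.Icc 0 4))
    (hκUconv : ConvexOn ℝ (Set.Icc 0 4) κU) :
    -- every aligned regular-simplex configuration attains the minimum
    (∀ U V : Fin M → EuclideanSpace ℝ (Fin d),
        (∀ i, ‖U i‖ = 1) → (∀ i, ‖V i‖ = 1) →
        (∀ i, U i = V i) →
        (∀ i j, i ≠ j → ⟪U i, U j⟫ = -1 / ((M : ℝ) - 1)) →
        ∀ U' V' : Fin M → EuclideanSpace ℝ (Fin d),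
          (∀ i, ‖U' i‖ = 1) → (∀ i, ‖V' i‖ = 1) →
          LkclSym d M γ κA κU U V ≤ LkclSym d M γ κA κU U' V') ∧
    -- under strictness these are the only minimizers
    (StrictAntiOn κA (Set.Icc 0 4) → StrictAntiOn κU (Set.Icc 0 4) →
      StrictConvexOn ℝ (Set.Icc 0 4) κU →
      ∀ U V : Fin M → EuclideanSpace ℝ (Fin d),
        (∀ i, ‖U i‖ = 1) → (∀ i, ‖V i‖ = 1) →
        (∀ U' V' : Fin M → EuclideanSpace ℝ (Fin d),
          (∀ i, ‖U' i‖ = 1) → (∀ i, ‖V' i‖ = 1) →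
          LkclSym d M γ κA κU U V ≤ LkclSym d M γ κA κU U' V') →
        (∀ i, U i = V i) ∧
        (∀ i j, i ≠ j → ⟪U i, U j⟫ = -1 / ((M : ℝ) - 1))) := by
  have hsym_ge : ∀ U' V' : Fin M → EuclideanSpace ℝ (Fin d),
      (∀ i, ‖U' i‖ = 1) → (∀ i, ‖V' i‖ = 1) →
      -κA 0 + γ * κU (2*(M:ℝ)/((M:ℝ)-1)) ≤ LkclSym d M γ κA κU U' V' := by
    intro U' V' hU' hV'
    have h1 := KCLaux.Lkcl_ge hM hγ κA κU hκA hκU hκUconv U' V' hU' hV'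
    have h2 := KCLaux.Lkcl_ge hM hγ κA κU hκA hκU hκUconv V' U' hV' hU'
    rw [LkclSym]
    linarith
  have hsym_simplex : ∀ U V : Fin M → EuclideanSpace ℝ (Fin d),
      (∀ i, ‖U i‖ = 1) → (∀ i, ‖V i‖ = 1) →
      (∀ i, U i = V i) →
      (∀ i j, i ≠ j → ⟪U i, U j⟫ = -1 / ((M : ℝ) - 1)) →
      LkclSym d M γ κA κU U V = -κA 0 + γ * κU (2*(M:ℝ)/((M:ℝ)-1)) := by
    intro U V hU hV hUV hsimp
    have hsimp' : ∀ i j, i ≠ j → ⟪U i, U j⟫ = -1 / ((M : ℝ) - 1) := hsimp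
    have hsimpV : ∀ i j, i ≠ j → ⟪V i, V j⟫ = -1 / ((M : ℝ) - 1) := by
      intro i j hij
      rw [← hUV i, ← hUV j]
      exact hsimp i j hij
    rw [LkclSym,
      KCLaux.Lkcl_simplex hM κA κU U V hUV hsimp hU,
      KCLaux.Lkcl_simplex hM κA κU V U (fun i => (hUV i).symm) hsimpV hV]
    ring
  constructor
  · intro U V hU hV hUV hsimp U' V' hU' hV'
    rw [hsym_simplex U V hU hV hUV hsimp]
    exact hsym_ge U' V' hU' hV'
  · intro hsA hsU hsC U V hU hV hmin
    obtain ⟨U0, hU0, hsimp0⟩ := KCLaux.exists_simplex d M hM hMd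
    have h0 : LkclSym d M γ κA κU U0 U0 = -κA 0 + γ * κU (2*(M:ℝ)/((M:ℝ)-1)) :=
      hsym_simplex U0 U0 hU0 hU0 (fun i => rfl) hsimp0
    have hle : LkclSym d M γ κA κU U V ≤ -κA 0 + γ * κU (2*(M:ℝ)/((M:ℝ)-1)) := by
      rw [← h0]; exact hmin U0 U0 hU0 hU0
    have hge := hsym_ge U V hU hV
    have g1 := KCLaux.Lkcl_ge hM hγ κA κU hκA hκU hκUconv U V hU hV
    have g2 := KCLaux.Lkcl_ge hM hγ κA κU hκA hκU hκUconv V U hV hU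
    rw [LkclSym] at hle
    have e1 : Lkcl d M γ κA κU U V = -κA 0 + γ * κU (2*(M:ℝ)/((M:ℝ)-1)) := by
      linarith
    obtain ⟨eA, eB⟩ := KCLaux.eq_case hM hγ κA κU hκA hκU hκUconv U V hU hV e1
    constructor
    · exact KCLaux.attr_eq κA hκA hsA U V hU hV eA
    · exact KCLaux.unif_eq hM κU hκU hκUconv hsU hsC U hU eB
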